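/- Let Q = [u1,...,un] (n ≥ 4) be a balanced spherical polygon (with no three vertices on a common great circle) without self or antipodal intersections, and suppose exactly three of its vertices u_i, u_j, u_k are essential. Then no two of these three essential vertices are consecutive in the cyclic order of Q. -/

import Mathlib

open Matrix

noncomputable section

/-- Determinant of the 3×3 matrix with columns `u`, `v`, `w`. -/
def det3 (u v w : Fin 3 → ℝ) : ℝ :=
  Matrix.det !![u 0, v 0, w 0; u 1, v 1, w 1; u 2, v 2, w 2]

/-- `u` lies on the unit sphere S². -/
def onSphere (u : Fin 3 → ℝ) : Prop := u ⬝ᵥ u = 1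

/-- `X` is contained in some closed hemisphere. -/
def InClosedHemisphere (X : Set (Fin 3 → ℝ)) : Prop :=
  ∃ n : Fin 3 → ℝ, n ⬝ᵥ n = 1 ∧ ∀ x ∈ X, 0 ≤ n ⬝ᵥ x

/-- `X` is balanced: not contained in any closed hemisphere. -/
def BalancedSet (X : Set (Fin 3 → ℝ)) : Prop := ¬ InClosedHemisphere X

/-- Radial projection to the unit sphere. -/
def normalize3 (x : Fin 3 → ℝ) : Fin 3 → ℝ := (Real.sqrt (x ⬝ᵥ x))⁻¹ • x

/-- The open minor geodesic arc from `u` to `v` (endpoints excluded). -/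
def openArc (u v : Fin 3 → ℝ) : Set (Fin 3 → ℝ) :=
  {x | ∃ s t : ℝ, 0 < s ∧ 0 < t ∧ x = normalize3 (s • u + t • v)}

/-- The closed minor geodesic arc from `u` to `v`. -/
def closedArc (u v : Fin 3 → ℝ) : Set (Fin 3 → ℝ) :=
  {x | ∃ s t : ℝ, 0 ≤ s ∧ 0 ≤ t ∧ 0 < s + t ∧ x = normalize3 (s • u + t • v)}

/-- The `i`-th edge of the closed spherical polygon with vertices `u`. -/
def edge {n : ℕ} (u : ZMod n → Fin 3 → ℝ) (i : ZMod n) : Set (Fin 3 → ℝ) :=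
  closedArc (u i) (u (i + 1))

/-- No three vertices lie on a common great circle. -/
def GeneralPosition {n : ℕ} (u : ZMod n → Fin 3 → ℝ) : Prop :=
  ∀ i j k : ZMod n, i ≠ j → j ≠ k → i ≠ k → det3 (u i) (u j) (u k) ≠ 0

/-- Edges `i` and `j` are nonadjacent. -/
def Nonadjacent {n : ℕ} (i j : ZMod n) : Prop := j ≠ i ∧ j ≠ i + 1 ∧ i ≠ j + 1

/-- The polygon is simple: nonadjacent edges do not intersect. -/
def SimplePolygon {n : ℕ} (u : ZMod n → Fin 3 → ℝ) : Prop :=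
  ∀ i j : ZMod n, Nonadjacent i j → edge u i ∩ edge u j = ∅

/-- A spherical inflection at index `i`. -/
def Inflection {n : ℕ} (u : ZMod n → Fin 3 → ℝ) (i : ZMod n) : Prop :=
  det3 (u (i - 1)) (u i) (u (i + 1)) * det3 (u i) (u (i + 1)) (u (i + 2)) < 0

/-- Number of spherical inflections of the polygon. -/
def inflectionCount {n : ℕ} (u : ZMod n → Fin 3 → ℝ) : ℕ :=
  Nat.card {i : ZMod n // Inflection u i}

/-- Number of self-intersections: unordered pairs of nonadjacent edges that meet. -/
def selfIntersectionCount {n : ℕ} (u : ZMod n → Fin 3 → ℝ) : ℕ :=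
  Nat.card {p : ZMod n × ZMod n //
    Nonadjacent p.1 p.2 ∧ (edge u p.1 ∩ edge u p.2).Nonempty} / 2

/-- Number of antipodal intersections: unordered pairs of distinct edges such that
one meets the antipodal image of the other. -/
def antipodalIntersectionCount {n : ℕ} (u : ZMod n → Fin 3 → ℝ) : ℕ :=
  Nat.card {p : ZMod n × ZMod n //
    p.1 ≠ p.2 ∧ (edge u p.1 ∩ (Neg.neg '' edge u p.2)).Nonempty} / 2

/-- Vertex `i` is essential: the remaining vertices lie in a common closed hemisphere. -/
def EssentialVertex {n : ℕ} (u : ZMod n → Fin 3 → ℝ) (i : ZMod n) : Prop :=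
  InClosedHemisphere {x | ∃ j, j ≠ i ∧ x = u j}

section AuxLemmas

lemma dot3_self_pos {x : Fin 3 → ℝ} (hx : x ≠ 0) : 0 < x ⬝ᵥ x := by
  have h : x 0 ≠ 0 ∨ x 1 ≠ 0 ∨ x 2 ≠ 0 := by
    by_contra h; push_neg at h
    apply hx
    funext i
    fin_cases i
    · exact h.1
    · exact h.2.1
    · exact h.2.2
  have h0 : x ⬝ᵥ x = x 0 * x 0 + x 1 * x 1 + x 2 * x 2 := by
    simp [dotProduct, Fin.sum_univ_three]
  rw [h0]
  rcases h with h | h | h <;>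
    nlinarith [mul_self_nonneg (x 0), mul_self_nonneg (x 1), mul_self_nonneg (x 2),
      mul_self_pos.mpr h]

lemma normalize3_neg (v : Fin 3 → ℝ) : normalize3 (-v) = -normalize3 v := by
  simp [normalize3, neg_dotProduct, dotProduct_neg, neg_neg, smul_neg]

lemma det3_smul_add (P Q x y : Fin 3 → ℝ) (α β : ℝ) :
    det3 P Q (α • x + β • y) = α * det3 P Q x + β * det3 P Q y := by
  simp only [det3, Matrix.det_fin_three, Matrix.cons_val', Matrix.cons_val_zero,
    Matrix.cons_val_one, Matrix.head_cons, Matrix.empty_val', Matrix.cons_val_fin_one,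
    Matrix.head_fin_const, Matrix.cons_val_two, Matrix.tail_cons, Matrix.of_apply,
    Pi.add_apply, Pi.smul_apply, smul_eq_mul]
  ring

lemma det3_smul_add3 (P Q w : Fin 3 → ℝ) (α β γ : ℝ) :
    det3 P Q (α • P + β • Q + γ • w) = γ * det3 P Q w := by
  simp only [det3, Matrix.det_fin_three, Matrix.cons_val', Matrix.cons_val_zero,
    Matrix.cons_val_one, Matrix.head_cons, Matrix.empty_val', Matrix.cons_val_fin_one,
    Matrix.head_fin_const, Matrix.cons_val_two, Matrix.tail_cons, Matrix.of_apply,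
    Pi.add_apply, Pi.smul_apply, smul_eq_mul]
  ring

lemma det3_third_self (P Q : Fin 3 → ℝ) : det3 P Q P = 0 := by
  simp only [det3, Matrix.det_fin_three, Matrix.cons_val', Matrix.cons_val_zero,
    Matrix.cons_val_one, Matrix.head_cons, Matrix.empty_val', Matrix.cons_val_fin_one,
    Matrix.head_fin_const, Matrix.cons_val_two, Matrix.tail_cons, Matrix.of_apply]
  ring

lemma det3_third_self' (P Q : Fin 3 → ℝ) : det3 P Q Q = 0 := by
  simp only [det3, Matrix.det_fin_three, Matrix.cons_val', Matrix.cons_val_zero,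
    Matrix.cons_val_one, Matrix.head_cons, Matrix.empty_val', Matrix.cons_val_fin_one,
    Matrix.head_fin_const, Matrix.cons_val_two, Matrix.tail_cons, Matrix.of_apply]
  ring

lemma det3_smul_first (w x : Fin 3 → ℝ) (μ : ℝ) : det3 (μ • w) w x = 0 := by
  simp only [det3, Matrix.det_fin_three, Matrix.cons_val', Matrix.cons_val_zero,
    Matrix.cons_val_one, Matrix.head_cons, Matrix.empty_val', Matrix.cons_val_fin_one,
    Matrix.head_fin_const, Matrix.cons_val_two, Matrix.tail_cons, Matrix.of_apply,
    Pi.smul_apply, smul_eq_mul]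
  ring

/-- If a nonzero vector is orthogonal to three vectors, their determinant vanishes. -/
lemma det3_eq_zero_of_orth {a v1 v2 v3 : Fin 3 → ℝ} (ha : a ≠ 0)
    (h1 : a ⬝ᵥ v1 = 0) (h2 : a ⬝ᵥ v2 = 0) (h3 : a ⬝ᵥ v3 = 0) :
    det3 v1 v2 v3 = 0 := by
  by_contra hdet
  have h1' : a 0 * v1 0 + a 1 * v1 1 + a 2 * v1 2 = 0 := by
    have := h1; simpa [dotProduct, Fin.sum_univ_three] using this
  have h2' : a 0 * v2 0 + a 1 * v2 1 + a 2 * v2 2 = 0 := by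
    have := h2; simpa [dotProduct, Fin.sum_univ_three] using this
  have h3' : a 0 * v3 0 + a 1 * v3 1 + a 2 * v3 2 = 0 := by
    have := h3; simpa [dotProduct, Fin.sum_univ_three] using this
  set R : Matrix (Fin 3) (Fin 3) ℝ := Matrix.of ![v1, v2, v3] with hR
  have hRdet : R.det = det3 v1 v2 v3 := by
    rw [Matrix.det_fin_three, det3, Matrix.det_fin_three]
    try simp only [hR, Matrix.of_apply, Matrix.cons_val', Matrix.cons_val_zero,
      Matrix.cons_val_one, Matrix.head_cons, Matrix.empty_val', Matrix.cons_val_fin_one,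
      Matrix.head_fin_const, Matrix.cons_val_two, Matrix.tail_cons]
    try ring
  have hRa : R.mulVec a = 0 := by
    funext i
    fin_cases i <;>
      simp [hR, Matrix.mulVec, dotProduct, Fin.sum_univ_three] <;>
      linarith [h1', h2', h3']
  have hu : IsUnit R.det := by
    rw [hRdet]; exact isUnit_iff_ne_zero.mpr hdet
  have hz : R⁻¹.mulVec (R.mulVec a) = R⁻¹.mulVec 0 := by rw [hRa]
  rw [Matrix.mulVec_mulVec, Matrix.nonsing_inv_mul R hu, Matrix.one_mulVec,
    Matrix.mulVec_zero] at hz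
  exact ha hz

/-- Decompose a vector in the plane spanned by `P`, `Q`. -/
lemma exists_decomp (P Q wit v : Fin 3 → ℝ) (hwit : det3 P Q wit ≠ 0)
    (hv : det3 P Q v = 0) : ∃ ξ η : ℝ, v = ξ • P + η • Q := by
  set M : Matrix (Fin 3) (Fin 3) ℝ :=
    Matrix.of ![![P 0, Q 0, wit 0], ![P 1, Q 1, wit 1], ![P 2, Q 2, wit 2]] with hM
  have hMdet : M.det = det3 P Q wit := by
    rw [Matrix.det_fin_three, det3, Matrix.det_fin_three]
    try simp only [hM, Matrix.of_apply, Matrix.cons_val', Matrix.cons_val_zero,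
      Matrix.cons_val_one, Matrix.head_cons, Matrix.empty_val', Matrix.cons_val_fin_one,
      Matrix.head_fin_const, Matrix.cons_val_two, Matrix.tail_cons]
    try ring
  have hu : IsUnit M.det := by rw [hMdet]; exact isUnit_iff_ne_zero.mpr hwit
  set x : Fin 3 → ℝ := M⁻¹.mulVec v with hx
  have hMx : M.mulVec x = v := by
    rw [hx, Matrix.mulVec_mulVec, Matrix.mul_nonsing_inv M hu, Matrix.one_mulVec]
  have hcomb : v = x 0 • P + x 1 • Q + x 2 • wit := by
    rw [← hMx]
    funext i
    fin_cases i <;>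
      simp [hM, Matrix.mulVec, dotProduct, Fin.sum_univ_three] <;>
      ring
  have hx2 : x 2 = 0 := by
    have h := hv
    rw [hcomb, det3_smul_add3] at h
    exact (mul_eq_zero.mp h).resolve_right hwit
  refine ⟨x 0, x 1, ?_⟩
  rw [hcomb, hx2]
  simp

/-- Discrete sign change. -/
lemma signChange (g : ℕ → ℝ) (N : ℕ) (h0 : ∀ r ≤ N, g r ≠ 0)
    (r1 r2 : ℕ) (hr1 : r1 ≤ N) (hr2 : r2 ≤ N) (hneg : g r1 < 0) (hpos : 0 < g r2) :
    ∃ r, r < N ∧ g r * g (r + 1) < 0 := by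
  by_contra h
  push_neg at h
  have key : ∀ r, r ≤ N → (0 < g r ↔ 0 < g 0) := by
    intro r
    induction r with
    | zero => intro _; exact Iff.rfl
    | succ k ih =>
      intro hk
      have hkN : k < N := by omega
      have h1 := h k hkN
      have h2 := h0 k (by omega)
      have h3 := h0 (k + 1) hk
      have hiff : (0 < g (k + 1)) ↔ (0 < g k) := by
        constructor <;> intro hx
        · rcases lt_or_gt_of_ne h2 with hc | hc
          · nlinarith
          · exact hc
        · rcases lt_or_gt_of_ne h3 with hc | hc
          · nlinarith
          · exact hc
      rw [hiff, ih (by omega)]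
  rcases lt_or_gt_of_ne (h0 0 (by omega)) with h00 | h00
  · have := (key r2 hr2).mp hpos
    linarith
  · have := (key r1 hr1).mpr h00
    linarith

end AuxLemmas


section Main

lemma normalize3_unit {x : Fin 3 → ℝ} (hx : x ≠ 0) :
    normalize3 x ⬝ᵥ normalize3 x = 1 := by
  have hS : 0 < x ⬝ᵥ x := dot3_self_pos hx
  have hsq : Real.sqrt (x ⬝ᵥ x) * Real.sqrt (x ⬝ᵥ x) = x ⬝ᵥ x := Real.mul_self_sqrt hS.le
  have hpos : 0 < Real.sqrt (x ⬝ᵥ x) := Real.sqrt_pos.mpr hS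
  have h1 : normalize3 x ⬝ᵥ normalize3 x
      = (Real.sqrt (x ⬝ᵥ x))⁻¹ * ((Real.sqrt (x ⬝ᵥ x))⁻¹ * (x ⬝ᵥ x)) := by
    simp only [normalize3, smul_dotProduct, dotProduct_smul, smul_eq_mul]
  have h3 : (Real.sqrt (x ⬝ᵥ x))⁻¹ * ((Real.sqrt (x ⬝ᵥ x))⁻¹ * (x ⬝ᵥ x))
      = (x ⬝ᵥ x) / (Real.sqrt (x ⬝ᵥ x) * Real.sqrt (x ⬝ᵥ x)) := by ring
  rw [h1, h3, hsq, div_self hS.ne']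

lemma balanced_contra {n : ℕ} (u : ZMod n → Fin 3 → ℝ)
    (hb : BalancedSet (Set.range u)) (c : Fin 3 → ℝ) (hc : c ≠ 0)
    (h : ∀ l, 0 ≤ c ⬝ᵥ u l) : False := by
  apply hb
  refine ⟨normalize3 c, normalize3_unit hc, ?_⟩
  rintro x ⟨l, rfl⟩
  simp only [normalize3, smul_dotProduct, smul_eq_mul]
  exact mul_nonneg (inv_nonneg.mpr (Real.sqrt_nonneg _)) (h l)

set_option maxHeartbeats 2000000 in
lemma key {n : ℕ} (hn : 4 ≤ n) (u : ZMod n → Fin 3 → ℝ)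
    (hgp : GeneralPosition u) (hb : BalancedSet (Set.range u))
    (hsimple : SimplePolygon u)
    (hanti : ∀ i j : ZMod n, i ≠ j → edge u i ∩ (Neg.neg '' edge u j) = ∅)
    (p : ZMod n) (h1 : EssentialVertex u p) (h2 : EssentialVertex u (p + 1)) :
    False := by
  haveI : NeZero n := ⟨by omega⟩
  -- index helpers
  have hidx : ∀ k l : ℕ, k < n → l < n → k ≠ l →
      p + (k : ZMod n) ≠ p + (l : ZMod n) := by
    intro k l hk hl hkl h
    have h2' := add_left_cancel h
    have h3 := congrArg ZMod.val h2'
    rw [ZMod.val_cast_of_lt hk, ZMod.val_cast_of_lt hl] at h3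
    exact hkl h3
  have hpq : p ≠ p + 1 := by
    have := hidx 0 1 (by omega) (by omega) (by omega)
    simpa using this
  -- essential witnesses
  obtain ⟨a, haU, ha⟩ := h1
  obtain ⟨b, hbU, hbw⟩ := h2
  have hA : ∀ l, l ≠ p → 0 ≤ a ⬝ᵥ u l := fun l hl => ha (u l) ⟨l, hl, rfl⟩
  have hB : ∀ l, l ≠ p + 1 → 0 ≤ b ⬝ᵥ u l := fun l hl => hbw (u l) ⟨l, hl, rfl⟩
  have ha0 : a ≠ 0 := by intro h; rw [h] at haU; simp at haU
  have hb0 : b ≠ 0 := by intro h; rw [h] at hbU; simp at hbU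
  have hAP : a ⬝ᵥ u p < 0 := by
    by_contra hcon
    push_neg at hcon
    refine balanced_contra u hb a ha0 (fun l => ?_)
    by_cases hl : l = p
    · rw [hl]; exact hcon
    · exact hA l hl
  have hBQ : b ⬝ᵥ u (p + 1) < 0 := by
    by_contra hcon
    push_neg at hcon
    refine balanced_contra u hb b hb0 (fun l => ?_)
    by_cases hl : l = p + 1
    · rw [hl]; exact hcon
    · exact hB l hl
  have hAq : 0 ≤ a ⬝ᵥ u (p + 1) := hA _ (Ne.symm hpq)
  have hBp : 0 ≤ b ⬝ᵥ u p := hB _ hpq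
  -- the functional φ = det3 (u p) (u (p+1)) ·  and its normal vector
  set P := u p with hP
  set Q := u (p + 1) with hQ
  set ν : Fin 3 → ℝ :=
    ![P 1 * Q 2 - P 2 * Q 1, P 2 * Q 0 - P 0 * Q 2, P 0 * Q 1 - P 1 * Q 0] with hν
  have hνdot : ∀ x : Fin 3 → ℝ, ν ⬝ᵥ x = det3 P Q x := by
    intro x
    rw [det3, Matrix.det_fin_three]
    simp [hν, dotProduct, Fin.sum_univ_three]
    ring
  have h2ne : p + ((2 : ℕ) : ZMod n) ≠ p ∧ p + ((2 : ℕ) : ZMod n) ≠ p + 1 := by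
    constructor
    · have := hidx 2 0 (by omega) (by omega) (by omega); simpa using this
    · have := hidx 2 1 (by omega) (by omega) (by omega); simpa using this
  have hν0 : ν ≠ 0 := by
    intro h
    have hd := hgp p (p + 1) (p + ((2 : ℕ) : ZMod n)) hpq (Ne.symm h2ne.2) (Ne.symm h2ne.1)
    apply hd
    rw [← hνdot, h]
    simp
  have hexneg : ∃ l : ZMod n, l ≠ p ∧ l ≠ p + 1 ∧ det3 P Q (u l) < 0 := by
    by_contra hcon
    push_neg at hcon
    refine balanced_contra u hb ν hν0 (fun l => ?_)
    rw [hνdot]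
    by_cases hl : l = p
    · rw [hl, ← hP, det3_third_self]
    · by_cases hl2 : l = p + 1
      · rw [hl2, ← hQ, det3_third_self']
      · exact hcon l hl hl2
  have hexpos : ∃ l : ZMod n, l ≠ p ∧ l ≠ p + 1 ∧ 0 < det3 P Q (u l) := by
    by_contra hcon
    push_neg at hcon
    have hν0' : (-ν) ≠ 0 := neg_ne_zero.mpr hν0
    refine balanced_contra u hb (-ν) hν0' (fun l => ?_)
    rw [neg_dotProduct, hνdot]
    by_cases hl : l = p
    · rw [hl, ← hP, det3_third_self]; simp
    · by_cases hl2 : l = p + 1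
      · rw [hl2, ← hQ, det3_third_self']; simp
      · have := hcon l hl hl2; linarith
  -- case split on degeneracy
  set c : Fin 3 → ℝ := (b ⬝ᵥ P) • a + (-(a ⬝ᵥ P)) • b with hc
  by_cases hc0 : c = 0
  · -- degenerate case
    have hBp' : 0 < b ⬝ᵥ P := by
      rcases lt_or_eq_of_le hBp with h | h
      · exact h
      · exfalso
        rw [hc, ← h] at hc0
        simp only [zero_smul, zero_add, smul_eq_zero, neg_eq_zero] at hc0
        rcases hc0 with h' | h'
        · linarith [hAP]
        · rw [h'] at hbU; simp at hbU
    have hzero : ∀ l, l ≠ p → l ≠ p + 1 → a ⬝ᵥ u l = 0 := by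
      intro l hlp hlq
      have ha1 := hA l hlp
      have hb1 := hB l hlq
      have h3 : c ⬝ᵥ u l = 0 := by rw [hc0]; simp
      rw [hc] at h3
      simp only [add_dotProduct, smul_dotProduct, smul_eq_mul] at h3
      have h4 : a ⬝ᵥ u l ≤ 0 := by nlinarith
      linarith
    rcases (show n = 4 ∨ 5 ≤ n by omega) with h4 | h5
    · -- n = 4
      subst h4
      have hoff : ∀ k : ZMod 4, k ≠ 0 → p + k ≠ p := by
        intro k hk h
        apply hk
        have := congrArg (fun x => x - p) h
        simpa using this
      have hoff2 : ∀ k k' : ZMod 4, k ≠ k' → p + k ≠ p + k' := by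
        intro k k' hk h
        apply hk
        have := congrArg (fun x => x - p) h
        simpa using this
      have memclass : ∀ l : ZMod 4, l = p ∨ l = p + 1 ∨ l = p + 2 ∨ l = p + 3 := by
        intro l
        have hl : l = p + (l - p) := by ring
        have hd4 : ∀ d : ZMod 4, d = 0 ∨ d = 1 ∨ d = 2 ∨ d = 3 := by decide
        rcases hd4 (l - p) with h | h | h | h
        · left; rw [hl, h]; ring
        · right; left; rw [hl, h]
        · right; right; left; rw [hl, h]
        · right; right; right; rw [hl, h]
      have o2 : a ⬝ᵥ u (p + 2) = 0 :=
        hzero _ (hoff 2 (by decide)) (hoff2 2 1 (by decide))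
      have o3 : a ⬝ᵥ u (p + 3) = 0 :=
        hzero _ (hoff 3 (by decide)) (hoff2 3 1 (by decide))
      have hAq4 : 0 < a ⬝ᵥ Q := by
        rcases lt_or_eq_of_le hAq with h | h
        · exact h
        · exfalso
          apply hgp (p + 1) (p + 2) (p + 3) (hoff2 1 2 (by decide)) (hoff2 2 3 (by decide))
            (hoff2 1 3 (by decide))
          exact det3_eq_zero_of_orth ha0 (by rw [hQ] at h; exact h.symm) o2 o3
      -- opposite signs at p+2, p+3
      obtain ⟨l1, hl1p, hl1q, hl1neg⟩ := hexneg
      obtain ⟨l2, hl2p, hl2q, hl2pos⟩ := hexpos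
      have hclass1 : l1 = p + 2 ∨ l1 = p + 3 := by
        rcases memclass l1 with h | h | h | h
        · exact absurd h hl1p
        · exact absurd h hl1q
        · exact Or.inl h
        · exact Or.inr h
      have hclass2 : l2 = p + 2 ∨ l2 = p + 3 := by
        rcases memclass l2 with h | h | h | h
        · exact absurd h hl2p
        · exact absurd h hl2q
        · exact Or.inl h
        · exact Or.inr h
      have hprod : det3 P Q (u (p + 2)) * det3 P Q (u (p + 3)) < 0 := by
        rcases hclass1 with h1' | h1' <;> rcases hclass2 with h2' | h2'
        · rw [h1'] at hl1neg; rw [h2'] at hl2pos; linarith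
        · rw [h1'] at hl1neg; rw [h2'] at hl2pos
          exact mul_neg_of_neg_of_pos hl1neg hl2pos
        · rw [h1'] at hl1neg; rw [h2'] at hl2pos
          exact mul_neg_of_pos_of_neg hl2pos hl1neg
        · rw [h1'] at hl1neg; rw [h2'] at hl2pos; linarith
      have hφ2 : det3 P Q (u (p + 2)) ≠ 0 := by
        intro h; rw [h] at hprod; simp at hprod
      have hdne : det3 P Q (u (p + 2)) - det3 P Q (u (p + 3)) ≠ 0 := by
        intro h
        have heq : det3 P Q (u (p + 2)) = det3 P Q (u (p + 3)) := by linarith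
        rw [← heq] at hprod
        nlinarith [mul_self_nonneg (det3 P Q (u (p + 2)))]
      set t0 : ℝ := det3 P Q (u (p + 2)) /
        (det3 P Q (u (p + 2)) - det3 P Q (u (p + 3))) with ht0
      have ht0pos : 0 < t0 := by
        rcases mul_neg_iff.mp hprod with ⟨hx, hy⟩ | ⟨hx, hy⟩
        · exact div_pos hx (by linarith)
        · exact div_pos_of_neg_of_neg hx (by linarith)
      have h1t : 0 < 1 - t0 := by
        have hfrac : (1 - t0) * (det3 P Q (u (p + 2)) - det3 P Q (u (p + 3)))
            = -det3 P Q (u (p + 3)) := by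
          rw [ht0]; field_simp; ring
        rcases mul_neg_iff.mp hprod with ⟨hx, hy⟩ | ⟨hx, hy⟩
        · nlinarith [hfrac]
        · nlinarith [hfrac]
      set v : Fin 3 → ℝ := (1 - t0) • u (p + 2) + t0 • u (p + 3) with hv
      have hdet0 : det3 P Q v = 0 := by
        rw [hv, det3_smul_add, ht0]
        field_simp
        ring
      have hvne : v ≠ 0 := by
        intro h
        have hum : u (p + 2) = ((1 - t0)⁻¹ * (-t0)) • u (p + 3) := by
          funext i
          have hcf := congrFun h i
          simp only [hv, Pi.add_apply, Pi.smul_apply, smul_eq_mul, Pi.zero_apply] at hcf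
          have h1tne : (1 : ℝ) - t0 ≠ 0 := by linarith
          simp only [Pi.smul_apply, smul_eq_mul]
          field_simp
          linarith
        apply hgp (p + 2) (p + 3) p (hoff2 2 3 (by decide)) (hoff 3 (by decide))
          (hoff 2 (by decide))
        rw [hum, det3_smul_first]
      obtain ⟨ξ, η, hvd⟩ := exists_decomp P Q (u (p + 2)) v hφ2 hdet0
      have e1 : a ⬝ᵥ v = ξ * (a ⬝ᵥ P) + η * (a ⬝ᵥ Q) := by
        rw [hvd]
        simp [dotProduct_add, dotProduct_smul, smul_eq_mul]
      have e0 : a ⬝ᵥ v = 0 := by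
        rw [hv]
        simp only [dotProduct_add, dotProduct_smul, smul_eq_mul]
        rw [o2, o3]
        ring
      have heq : ξ * (a ⬝ᵥ P) + η * (a ⬝ᵥ Q) = 0 := by rw [← e1, e0]
      have hξne : ξ ≠ 0 := by
        intro h
        rw [h] at heq
        have hm0 : η * (a ⬝ᵥ Q) = 0 := by linarith
        have hη0 : η = 0 := by
          rcases mul_eq_zero.mp hm0 with h' | h'
          · exact h'
          · exfalso; rw [h'] at hAq4; exact lt_irrefl 0 hAq4
        apply hvne
        rw [hvd, h, hη0]
        simp
      have hp23 : p + 2 + 1 = p + 3 := by ring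
      rcases lt_or_gt_of_ne hξne with hξ | hξ
      · -- ξ < 0 : antipodal intersection
        have hη : η < 0 := by nlinarith
        have hz1 : normalize3 v ∈ edge u (p + 2) := by
          refine ⟨1 - t0, t0, by linarith, by linarith, by linarith, ?_⟩
          rw [hp23, ← hv]
        have hz2 : -(normalize3 v) ∈ edge u p := by
          refine ⟨-ξ, -η, by linarith, by linarith, by linarith, ?_⟩
          have hvec : -ξ • P + -η • Q = -v := by rw [hvd]; module
          rw [← hP, ← hQ, hvec, normalize3_neg]
        refine Set.eq_empty_iff_forall_notMem.mp (hanti (p + 2) p (hoff 2 (by decide)))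
          (normalize3 v) ⟨hz1, ⟨-(normalize3 v), hz2, by simp⟩⟩
      · -- ξ > 0 : self intersection
        have hη : η > 0 := by nlinarith
        have hz1 : normalize3 v ∈ edge u (p + 2) := by
          refine ⟨1 - t0, t0, by linarith, by linarith, by linarith, ?_⟩
          rw [hp23, ← hv]
        have hz3 : normalize3 v ∈ edge u p := by
          refine ⟨ξ, η, by linarith, by linarith, by linarith, ?_⟩
          rw [← hP, ← hQ, hvd]
        have hna : Nonadjacent p (p + 2) := by
          refine ⟨hoff 2 (by decide), hoff2 2 1 (by decide), ?_⟩
          rw [hp23]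
          exact (hoff 3 (by decide)).symm
        exact Set.eq_empty_iff_forall_notMem.mp (hsimple p (p + 2) hna)
          (normalize3 v) ⟨hz3, hz1⟩
    · -- n ≥ 5 : three vertices orthogonal to a, contradiction with general position
      have hv2 : p + ((2:ℕ) : ZMod n) ≠ p ∧ p + ((2:ℕ) : ZMod n) ≠ p + 1 := h2ne
      have hv3 : p + ((3:ℕ) : ZMod n) ≠ p ∧ p + ((3:ℕ) : ZMod n) ≠ p + 1 := by
        constructor
        · have := hidx 3 0 (by omega) (by omega) (by omega); simpa using this
        · have := hidx 3 1 (by omega) (by omega) (by omega); simpa using this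
      have hv4 : p + ((4:ℕ) : ZMod n) ≠ p ∧ p + ((4:ℕ) : ZMod n) ≠ p + 1 := by
        constructor
        · have := hidx 4 0 (by omega) (by omega) (by omega); simpa using this
        · have := hidx 4 1 (by omega) (by omega) (by omega); simpa using this
      have o2 := hzero _ hv2.1 hv2.2
      have o3 := hzero _ hv3.1 hv3.2
      have o4 := hzero _ hv4.1 hv4.2
      exact hgp _ _ _ (hidx 2 3 (by omega) (by omega) (by omega))
        (hidx 3 4 (by omega) (by omega) (by omega))
        (hidx 2 4 (by omega) (by omega) (by omega))
        (det3_eq_zero_of_orth ha0 o2 o3 o4)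
  · -- main case
    have hD : 0 < (a ⬝ᵥ P) * (b ⬝ᵥ Q) - (a ⬝ᵥ Q) * (b ⬝ᵥ P) := by
      by_contra hcon
      push_neg at hcon
      refine balanced_contra u hb c hc0 (fun l => ?_)
      rw [hc]
      simp only [add_dotProduct, smul_dotProduct, smul_eq_mul]
      by_cases hl : l = p
      · rw [hl, ← hP]
        have : (b ⬝ᵥ P) * (a ⬝ᵥ P) + (-(a ⬝ᵥ P)) * (b ⬝ᵥ P) = 0 := by ring
        linarith
      · by_cases hl2 : l = p + 1
        · rw [hl2, ← hQ]
          have : (b ⬝ᵥ P) * (a ⬝ᵥ Q) + (-(a ⬝ᵥ P)) * (b ⬝ᵥ Q)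
              = -((a ⬝ᵥ P) * (b ⬝ᵥ Q) - (a ⬝ᵥ Q) * (b ⬝ᵥ P)) := by ring
          linarith
        · exact add_nonneg (mul_nonneg hBp (hA l hl))
            (mul_nonneg (by linarith) (hB l hl2))
    -- convert essential-sign vertices to offsets
    have hconv : ∀ l : ZMod n, l ≠ p → l ≠ p + 1 →
        ∃ r : ℕ, r ≤ n - 3 ∧ l = p + (((r + 2) : ℕ) : ZMod n) := by
      intro l hlp hlq
      have hval : (((l - p).val : ℕ) : ZMod n) = l - p := by
        rw [ZMod.natCast_val, ZMod.cast_id]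
      have hl : l = p + (((l - p).val : ℕ) : ZMod n) := by rw [hval]; ring
      have hvlt : (l - p).val < n := ZMod.val_lt _
      have hne0 : (l - p).val ≠ 0 := by
        intro h
        apply hlp
        have : l - p = 0 := by rw [← hval, h]; simp
        rw [hl, ← hval, h]; simp
      have hne1 : (l - p).val ≠ 1 := by
        intro h
        apply hlq
        rw [hl, h]; simp
      refine ⟨(l - p).val - 2, by omega, ?_⟩
      have : (l - p).val - 2 + 2 = (l - p).val := by omega
      rw [this]
      exact hl
    obtain ⟨l1, hl1p, hl1q, hl1neg⟩ := hexneg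
    obtain ⟨l2, hl2p, hl2q, hl2pos⟩ := hexpos
    obtain ⟨r1, hr1, hl1eq⟩ := hconv l1 hl1p hl1q
    obtain ⟨r2, hr2, hl2eq⟩ := hconv l2 hl2p hl2q
    set g : ℕ → ℝ := fun r => det3 P Q (u (p + (((r + 2) : ℕ) : ZMod n))) with hg
    have hgne : ∀ r, r ≤ n - 3 → g r ≠ 0 := by
      intro r hr
      have hrp : p + (((r + 2) : ℕ) : ZMod n) ≠ p := by
        have := hidx (r + 2) 0 (by omega) (by omega) (by omega); simpa using this
      have hrq : p + (((r + 2) : ℕ) : ZMod n) ≠ p + 1 := by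
        have := hidx (r + 2) 1 (by omega) (by omega) (by omega); simpa using this
      exact hgp p (p + 1) _ hpq (Ne.symm hrq) (Ne.symm hrp)
    have hgr1 : g r1 < 0 := by simp only [hg]; rw [← hl1eq]; exact hl1neg
    have hgr2 : 0 < g r2 := by simp only [hg]; rw [← hl2eq]; exact hl2pos
    obtain ⟨r, hrN, hsign⟩ := signChange g (n - 3) hgne r1 r2 hr1 hr2 hgr1 hgr2
    set m : ZMod n := p + (((r + 2) : ℕ) : ZMod n) with hm
    have hmp : m ≠ p := by
      rw [hm]; have := hidx (r + 2) 0 (by omega) (by omega) (by omega); simpa using this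
    have hmq : m ≠ p + 1 := by
      rw [hm]; have := hidx (r + 2) 1 (by omega) (by omega) (by omega); simpa using this
    have hm1 : m + 1 = p + (((r + 3) : ℕ) : ZMod n) := by
      rw [hm]; push_cast; ring
    have hm1p : m + 1 ≠ p := by
      rw [hm1]; have := hidx (r + 3) 0 (by omega) (by omega) (by omega); simpa using this
    have hm1q : m + 1 ≠ p + 1 := by
      rw [hm1]; have := hidx (r + 3) 1 (by omega) (by omega) (by omega); simpa using this
    have hmm1 : m ≠ m + 1 := by
      rw [hm, hm1]
      exact hidx (r + 2) (r + 3) (by omega) (by omega) (by omega)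
    have hφm : det3 P Q (u m) = g r := by simp only [hg, ← hm]
    have hφm1 : det3 P Q (u (m + 1)) = g (r + 1) := by
      rw [hm1]
    have hsign' : det3 P Q (u m) * det3 P Q (u (m + 1)) < 0 := by
      rw [hφm, hφm1]; exact hsign
    have hφmne : det3 P Q (u m) ≠ 0 := by
      intro h; rw [h] at hsign'; simp at hsign'
    have hdne : det3 P Q (u m) - det3 P Q (u (m + 1)) ≠ 0 := by
      intro h
      have heq : det3 P Q (u m) = det3 P Q (u (m + 1)) := by linarith
      rw [← heq] at hsign'
      nlinarith [mul_self_nonneg (det3 P Q (u m))]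
    set t0 : ℝ := det3 P Q (u m) / (det3 P Q (u m) - det3 P Q (u (m + 1))) with ht0
    have ht0pos : 0 < t0 := by
      rcases mul_neg_iff.mp hsign' with ⟨hx, hy⟩ | ⟨hx, hy⟩
      · exact div_pos hx (by linarith)
      · exact div_pos_of_neg_of_neg hx (by linarith)
    have h1t : 0 < 1 - t0 := by
      have hfrac : (1 - t0) * (det3 P Q (u m) - det3 P Q (u (m + 1)))
          = -det3 P Q (u (m + 1)) := by
        rw [ht0]; field_simp; ring
      rcases mul_neg_iff.mp hsign' with ⟨hx, hy⟩ | ⟨hx, hy⟩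
      · nlinarith [hfrac]
      · nlinarith [hfrac]
    set v : Fin 3 → ℝ := (1 - t0) • u m + t0 • u (m + 1) with hv
    have hdet0 : det3 P Q v = 0 := by
      rw [hv, det3_smul_add, ht0]
      field_simp
      ring
    have hvne : v ≠ 0 := by
      intro h
      have hum : u m = ((1 - t0)⁻¹ * (-t0)) • u (m + 1) := by
        funext i
        have hcf := congrFun h i
        simp only [hv, Pi.add_apply, Pi.smul_apply, smul_eq_mul, Pi.zero_apply] at hcf
        have h1tne : (1 : ℝ) - t0 ≠ 0 := by linarith
        simp only [Pi.smul_apply, smul_eq_mul]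
        field_simp
        linarith
      apply hgp m (m + 1) p hmm1 hm1p hmp
      rw [hum, det3_smul_first]
    obtain ⟨ξ, η, hvd⟩ := exists_decomp P Q (u m) v hφmne hdet0
    have hs1 : 0 ≤ ξ * (a ⬝ᵥ P) + η * (a ⬝ᵥ Q) := by
      have e1 : a ⬝ᵥ v = ξ * (a ⬝ᵥ P) + η * (a ⬝ᵥ Q) := by
        rw [hvd]
        simp [dotProduct_add, dotProduct_smul, smul_eq_mul]
      have e2 : 0 ≤ a ⬝ᵥ v := by
        rw [hv]
        simp only [dotProduct_add, dotProduct_smul, smul_eq_mul]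
        exact add_nonneg (mul_nonneg h1t.le (hA m hmp))
          (mul_nonneg ht0pos.le (hA (m + 1) hm1p))
      rw [e1] at e2
      exact e2
    have hs2 : 0 ≤ ξ * (b ⬝ᵥ P) + η * (b ⬝ᵥ Q) := by
      have e1 : b ⬝ᵥ v = ξ * (b ⬝ᵥ P) + η * (b ⬝ᵥ Q) := by
        rw [hvd]
        simp [dotProduct_add, dotProduct_smul, smul_eq_mul]
      have e2 : 0 ≤ b ⬝ᵥ v := by
        rw [hv]
        simp only [dotProduct_add, dotProduct_smul, smul_eq_mul]
        exact add_nonneg (mul_nonneg h1t.le (hB m hmq))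
          (mul_nonneg ht0pos.le (hB (m + 1) hm1q))
      rw [e1] at e2
      exact e2
    have hξ : ξ ≤ 0 := by
      by_contra hcon
      push_neg at hcon
      have t1 : (ξ * (a ⬝ᵥ P) + η * (a ⬝ᵥ Q)) * (b ⬝ᵥ Q) ≤ 0 :=
        mul_nonpos_of_nonneg_of_nonpos hs1 hBQ.le
      have t2 : 0 ≤ (ξ * (b ⬝ᵥ P) + η * (b ⬝ᵥ Q)) * (a ⬝ᵥ Q) :=
        mul_nonneg hs2 hAq
      nlinarith [mul_pos hcon hD]
    have hη : η ≤ 0 := by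
      by_contra hcon
      push_neg at hcon
      have t1 : 0 ≤ (ξ * (a ⬝ᵥ P) + η * (a ⬝ᵥ Q)) * (b ⬝ᵥ P) :=
        mul_nonneg hs1 hBp
      have t2 : (ξ * (b ⬝ᵥ P) + η * (b ⬝ᵥ Q)) * (a ⬝ᵥ P) ≤ 0 :=
        mul_nonpos_of_nonneg_of_nonpos hs2 hAP.le
      nlinarith [mul_pos hcon hD]
    have hnb : ξ < 0 ∨ η < 0 := by
      by_contra hcon
      push_neg at hcon
      have hx0 : ξ = 0 := le_antisymm hξ hcon.1
      have hy0 : η = 0 := le_antisymm hη hcon.2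
      apply hvne
      rw [hvd, hx0, hy0]
      simp
    have hz1 : normalize3 v ∈ edge u m := by
      refine ⟨1 - t0, t0, by linarith, by linarith, by linarith, ?_⟩
      rw [← hv]
    have hz2 : -(normalize3 v) ∈ edge u p := by
      refine ⟨-ξ, -η, by linarith, by linarith, ?_, ?_⟩
      · rcases hnb with h | h <;> linarith
      · have hvec : -ξ • P + -η • Q = -v := by rw [hvd]; module
        rw [← hP, ← hQ, hvec, normalize3_neg]
    exact Set.eq_empty_iff_forall_notMem.mp (hanti m p hmp) (normalize3 v)
      ⟨hz1, ⟨-(normalize3 v), hz2, by simp⟩⟩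

end Main


theorem essential_vertices_not_consecutive (n : ℕ) (hn : 4 ≤ n)
    (u : ZMod n → Fin 3 → ℝ)
    (hs : ∀ i, onSphere (u i)) (hgp : GeneralPosition u)
    (hb : BalancedSet (Set.range u)) (hsimple : SimplePolygon u)
    (hanti : ∀ i j : ZMod n, i ≠ j → edge u i ∩ (Neg.neg '' edge u j) = ∅)
    (i j k : ZMod n) (hij : i ≠ j) (hik : i ≠ k) (hjk : j ≠ k)
    (hei : EssentialVertex u i) (hej : EssentialVertex u j) (hek : EssentialVertex u k)
    (honly : ∀ l : ZMod n, EssentialVertex u l → l = i ∨ l = j ∨ l = k) :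
    j ≠ i + 1 ∧ i ≠ j + 1 ∧ k ≠ i + 1 ∧ i ≠ k + 1 ∧ k ≠ j + 1 ∧ j ≠ k + 1 := by
  exact ⟨fun h => key hn u hgp hb hsimple hanti i hei (h ▸ hej),
    fun h => key hn u hgp hb hsimple hanti j hej (h ▸ hei),
    fun h => key hn u hgp hb hsimple hanti i hei (h ▸ hek),
    fun h => key hn u hgp hb hsimple hanti k hek (h ▸ hei),
    fun h => key hn u hgp hb hsimple hanti j hej (h ▸ hek),
    fun h => key hn u hgp hb hsimple hanti k hek (h ▸ hej)⟩
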